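/- arXiv:1508.01633 — 4 statements merged into one kernel-verified Lean document; each statement's English description precedes it below -/
import Mathlib

section
/- Let f₁, …, f_N : ℝ^d → ℝ be differentiable with F(w) = (1/N)∑_{i=1}^N f_i(w), and suppose each gradient ∇f_i is L-Lipschitz, i.e. ‖∇f_i(x) − ∇f_i(y)‖ ≤ L‖x − y‖ for all x, y. Then for all w, w̃ ∈ ℝ^d, the variance of the variance-reduced stochastic gradient over a uniformly random index i satisfies (1/N)∑_{i=1}^N ‖ĝ_i(w; w̃) − ∇F(w)‖² ≤ L²‖w − w̃‖², where ĝ_i(w; w̃) = ∇f_i(w) − ∇f_i(w̃) + ∇F(w̃). -/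
/-- If each gradient `∇ f i` is `L`-Lipschitz, then for all `w, wt` the variance of the
variance-reduced stochastic gradient `ĝ_i(w; wt) = ∇f_i(w) − ∇f_i(wt) + ∇F(wt)` over a
uniformly random index `i` satisfies `(1/N) ∑ i, ‖ĝ_i(w; wt) − ∇F(w)‖² ≤ L²‖w − wt‖²`. -/
theorem stmt_5 (d N : ℕ) (hN : 1 ≤ N)
    (f : Fin N → EuclideanSpace ℝ (Fin d) → ℝ)
    (hf : ∀ i, Differentiable ℝ (f i))
    (F : EuclideanSpace ℝ (Fin d) → ℝ)
    (hF : ∀ w, F w = (1 / (N : ℝ)) * ∑ i, f i w)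
    (L : ℝ)
    (hLip : ∀ i x y, ‖gradient (f i) x - gradient (f i) y‖ ≤ L * ‖x - y‖)
    (w wt : EuclideanSpace ℝ (Fin d)) :
    (1 / (N : ℝ)) * ∑ i,
        ‖(gradient (f i) w - gradient (f i) wt + gradient F wt) - gradient F w‖ ^ 2
      ≤ L ^ 2 * ‖w - wt‖ ^ 2 := by
  have hNpos : (0 : ℝ) < N := by exact_mod_cast hN
  set g : Fin N → EuclideanSpace ℝ (Fin d) → EuclideanSpace ℝ (Fin d) :=
    fun i => gradient (f i) with hg
  -- gradient of F
  have hgradF : ∀ x, gradient F x = ((N : ℝ)⁻¹) • ∑ i, g i x := by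
    intro x
    have hsum : HasFDerivAt (fun y => ∑ i, f i y)
        (∑ i, InnerProductSpace.toDual ℝ _ (g i x)) x :=
      HasFDerivAt.fun_sum (fun i _ => ((hf i x).hasGradientAt).hasFDerivAt)
    have hFd : HasFDerivAt F
        (((N : ℝ)⁻¹) • ∑ i, InnerProductSpace.toDual ℝ _ (g i x)) x := by
      have := hsum.const_smul ((N : ℝ)⁻¹)
      refine this.congr_of_eventuallyEq ?_
      filter_upwards with y
      rw [hF y]
      simp [one_div, smul_eq_mul]
    have : HasGradientAt F (((N : ℝ)⁻¹) • ∑ i, g i x) x := by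
      rw [hasGradientAt_iff_hasFDerivAt]
      refine hFd.congr_fderiv ?_
      simp [map_sum]
    exact this.gradient
  set a : Fin N → EuclideanSpace ℝ (Fin d) := fun i => g i w - g i wt with ha
  set m : EuclideanSpace ℝ (Fin d) := ((N : ℝ)⁻¹) • ∑ i, a i with hm
  have hterm : ∀ i, (g i w - g i wt + gradient F wt) - gradient F w = a i - m := by
    intro i
    rw [hgradF, hgradF, hm, ha]
    simp only [smul_sub, Finset.sum_sub_distrib]
    abel
  have hsum_a : ∑ i, a i = (N : ℝ) • m := by
    rw [hm, smul_smul, mul_inv_cancel₀ hNpos.ne', one_smul]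
  have hinner : ∑ i, (inner ℝ (a i) m : ℝ) = (N : ℝ) * ‖m‖ ^ 2 := by
    rw [← sum_inner, hsum_a, real_inner_smul_left, real_inner_self_eq_norm_sq]
  have h1 : ∑ i, ‖a i - m‖ ^ 2 = ∑ i, ‖a i‖ ^ 2 - (N : ℝ) * ‖m‖ ^ 2 := by
    have expand : ∀ i ∈ Finset.univ, ‖a i - m‖ ^ 2 = ‖a i‖ ^ 2 - 2 * (inner ℝ (a i) m : ℝ) + ‖m‖ ^ 2 :=
      fun i _ => norm_sub_sq_real _ _
    rw [Finset.sum_congr rfl expand]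
    simp only [Finset.sum_add_distrib, Finset.sum_sub_distrib, ← Finset.mul_sum, hinner,
      Finset.sum_const, Finset.card_univ, Fintype.card_fin, nsmul_eq_mul]
    ring
  have hvar : ∑ i, ‖a i - m‖ ^ 2 ≤ ∑ i, ‖a i‖ ^ 2 := by
    rw [h1]
    have : 0 ≤ (N : ℝ) * ‖m‖ ^ 2 := by positivity
    linarith
  have hbound : ∑ i, ‖a i‖ ^ 2 ≤ (N : ℝ) * (L ^ 2 * ‖w - wt‖ ^ 2) := by
    calc ∑ i, ‖a i‖ ^ 2 ≤ ∑ _i : Fin N, (L * ‖w - wt‖) ^ 2 := by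
          refine Finset.sum_le_sum fun i _ => ?_
          exact pow_le_pow_left₀ (norm_nonneg _) (hLip i w wt) 2
      _ = (N : ℝ) * (L ^ 2 * ‖w - wt‖ ^ 2) := by
          simp [Finset.sum_const, Finset.card_univ, mul_pow, mul_assoc]
  calc (1 / (N : ℝ)) * ∑ i, ‖(g i w - g i wt + gradient F wt) - gradient F w‖ ^ 2
      = (1 / (N : ℝ)) * ∑ i, ‖a i - m‖ ^ 2 := by
        congr 1; exact Finset.sum_congr rfl fun i _ => by rw [hterm i]
    _ ≤ (1 / (N : ℝ)) * ((N : ℝ) * (L ^ 2 * ‖w - wt‖ ^ 2)) := by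
        apply mul_le_mul_of_nonneg_left (le_trans hvar hbound) (by positivity)
    _ = L ^ 2 * ‖w - wt‖ ^ 2 := by
        field_simp
end

section
/- Let f₁, …, f_N : ℝ^d → ℝ be differentiable with F(w) = (1/N)∑_{i=1}^N f_i(w), and suppose each gradient ∇f_i is L-Lipschitz, i.e. ‖∇f_i(x) − ∇f_i(y)‖ ≤ L‖x − y‖ for all x, y. Let w* ∈ ℝ^d satisfy ∇F(w*) = 0. Then for all w, w̃ ∈ ℝ^d, the second moment of the variance-reduced stochastic gradient over a uniformly random index i satisfies (1/N)∑_{i=1}^N ‖ĝ_i(w; w̃)‖² ≤ 2L²‖w − w*‖² + 2L²‖w̃ − w*‖², where ĝ_i(w; w̃) = ∇f_i(w) − ∇f_i(w̃) + ∇F(w̃). -/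
open InnerProductSpace Finset

/-- If each gradient `∇ f i` is `L`-Lipschitz and `∇F(w*) = 0`, then for all `w, wt` the
second moment of the variance-reduced stochastic gradient
`ĝ_i(w; wt) = ∇f_i(w) − ∇f_i(wt) + ∇F(wt)` over a uniformly random index `i` satisfies
`(1/N) ∑ i, ‖ĝ_i(w; wt)‖² ≤ 2L²‖w − w*‖² + 2L²‖wt − w*‖²`. -/
theorem stmt_6 (d N : ℕ) (hN : 1 ≤ N)
    (f : Fin N → EuclideanSpace ℝ (Fin d) → ℝ)
    (hf : ∀ i, Differentiable ℝ (f i))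
    (F : EuclideanSpace ℝ (Fin d) → ℝ)
    (hF : ∀ w, F w = (1 / (N : ℝ)) * ∑ i, f i w)
    (L : ℝ)
    (hLip : ∀ i x y, ‖gradient (f i) x - gradient (f i) y‖ ≤ L * ‖x - y‖)
    (wstar : EuclideanSpace ℝ (Fin d)) (hstat : gradient F wstar = 0)
    (w wt : EuclideanSpace ℝ (Fin d)) :
    (1 / (N : ℝ)) * ∑ i,
        ‖gradient (f i) w - gradient (f i) wt + gradient F wt‖ ^ 2
      ≤ 2 * L ^ 2 * ‖w - wstar‖ ^ 2 + 2 * L ^ 2 * ‖wt - wstar‖ ^ 2 := by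
  have hNpos : (0:ℝ) < N := by exact_mod_cast hN
  set g : Fin N → EuclideanSpace ℝ (Fin d) → EuclideanSpace ℝ (Fin d) :=
    fun i => gradient (f i) with hg
  -- gradient of F
  have hgradF : ∀ x, HasGradientAt F ((N:ℝ)⁻¹ • ∑ i, g i x) x := by
    intro x
    have h1 : HasFDerivAt (fun w => ∑ i, f i w)
        (∑ i, (toDual ℝ (EuclideanSpace ℝ (Fin d))) (g i x)) x :=
      HasFDerivAt.fun_sum fun i _ => ((hf i).differentiableAt.hasGradientAt).hasFDerivAt
    have h2 := h1.const_mul ((N:ℝ)⁻¹)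
    have h3 : F = fun w => (N:ℝ)⁻¹ * ∑ i, f i w := by
      funext w; rw [hF w, one_div]
    rw [h3]
    have h4 := h2.hasGradientAt
    convert h4 using 1
    simp [map_sum]
  have hFwt : gradient F wt = (N:ℝ)⁻¹ • ∑ i, g i wt := (hgradF wt).gradient
  have hsumstar : ∑ i, g i wstar = 0 := by
    have h := ((hgradF wstar).gradient).symm
    rw [hstat] at h
    rwa [smul_eq_zero_iff_right (by positivity : ((N:ℝ)⁻¹) ≠ 0)] at h
  set xbar : EuclideanSpace ℝ (Fin d) := gradient F wt with hxbar
  set a : Fin N → EuclideanSpace ℝ (Fin d) := fun i => g i w - g i wstar with ha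
  set b : Fin N → EuclideanSpace ℝ (Fin d) := fun i => xbar - (g i wt - g i wstar) with hb
  have hsum_x : ∑ i, (g i wt - g i wstar) = (N:ℝ) • xbar := by
    rw [Finset.sum_sub_distrib, hsumstar, sub_zero,
      hFwt, smul_smul, mul_inv_cancel₀ (ne_of_gt hNpos), one_smul]
  have hterm : ∀ i, ‖g i w - g i wt + gradient F wt‖ ^ 2 ≤ 2 * ‖a i‖^2 + 2 * ‖b i‖^2 := by
    intro i
    have hab : g i w - g i wt + gradient F wt = a i + b i := by
      simp only [ha, hb, hxbar]; abel
    rw [hab]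
    have h1 : ‖a i + b i‖ ^ 2 ≤ (‖a i‖ + ‖b i‖) ^ 2 :=
      pow_le_pow_left₀ (norm_nonneg _) (norm_add_le _ _) 2
    nlinarith [sq_nonneg (‖a i‖ - ‖b i‖)]
  have hA : ∀ i, ‖a i‖^2 ≤ L^2 * ‖w - wstar‖^2 := by
    intro i
    have h2 : ‖a i‖^2 ≤ (L * ‖w - wstar‖)^2 :=
      pow_le_pow_left₀ (norm_nonneg _) (hLip i w wstar) 2
    calc ‖a i‖^2 ≤ (L * ‖w - wstar‖)^2 := h2
      _ = L^2 * ‖w - wstar‖^2 := by ring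
  have hX : ∀ i, ‖g i wt - g i wstar‖^2 ≤ L^2 * ‖wt - wstar‖^2 := by
    intro i
    have h2 : ‖g i wt - g i wstar‖^2 ≤ (L * ‖wt - wstar‖)^2 :=
      pow_le_pow_left₀ (norm_nonneg _) (hLip i wt wstar) 2
    calc ‖g i wt - g i wstar‖^2 ≤ (L * ‖wt - wstar‖)^2 := h2
      _ = L^2 * ‖wt - wstar‖^2 := by ring
  -- variance bound for b
  have hinner : ∑ i, ⟪g i wt - g i wstar, xbar⟫_ℝ = (N:ℝ) * ‖xbar‖^2 := by
    rw [← sum_inner, hsum_x, real_inner_smul_left, real_inner_self_eq_norm_sq]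
  have expand : ∀ i, ‖b i‖^2
      = ‖g i wt - g i wstar‖^2 - 2 * ⟪g i wt - g i wstar, xbar⟫_ℝ + ‖xbar‖^2 := by
    intro i
    have hrev : ‖b i‖ = ‖(g i wt - g i wstar) - xbar‖ := by
      rw [hb, norm_sub_rev]
    rw [hrev, norm_sub_sq_real]
  have hBsum : ∑ i, ‖b i‖^2 ≤ ∑ i, ‖g i wt - g i wstar‖^2 := by
    have h1 : ∑ i, ‖b i‖^2
        = ∑ i, ‖g i wt - g i wstar‖^2 - 2 * ((N:ℝ) * ‖xbar‖^2) + (N:ℝ) * ‖xbar‖^2 := by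
      simp_rw [expand]
      rw [Finset.sum_add_distrib, Finset.sum_sub_distrib, ← Finset.mul_sum, hinner,
        Finset.sum_const, Finset.card_univ, Fintype.card_fin, nsmul_eq_mul]
    have h2 : (0:ℝ) ≤ (N:ℝ) * ‖xbar‖^2 := by positivity
    linarith
  -- assemble
  have hsumA : ∑ i, ‖a i‖^2 ≤ (N:ℝ) * (L^2 * ‖w - wstar‖^2) := by
    calc ∑ i, ‖a i‖^2 ≤ ∑ _i : Fin N, L^2 * ‖w - wstar‖^2 :=
          Finset.sum_le_sum fun i _ => hA i
      _ = (N:ℝ) * (L^2 * ‖w - wstar‖^2) := by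
          rw [Finset.sum_const, Finset.card_univ, Fintype.card_fin, nsmul_eq_mul]
  have hsumB : ∑ i, ‖b i‖^2 ≤ (N:ℝ) * (L^2 * ‖wt - wstar‖^2) := by
    calc ∑ i, ‖b i‖^2 ≤ ∑ i, ‖g i wt - g i wstar‖^2 := hBsum
      _ ≤ ∑ _i : Fin N, L^2 * ‖wt - wstar‖^2 := Finset.sum_le_sum fun i _ => hX i
      _ = (N:ℝ) * (L^2 * ‖wt - wstar‖^2) := by
          rw [Finset.sum_const, Finset.card_univ, Fintype.card_fin, nsmul_eq_mul]
  have hS : ∑ i, ‖g i w - g i wt + gradient F wt‖ ^ 2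
      ≤ (N:ℝ) * (2 * L^2 * ‖w - wstar‖^2 + 2 * L^2 * ‖wt - wstar‖^2) := by
    calc ∑ i, ‖g i w - g i wt + gradient F wt‖ ^ 2
        ≤ ∑ i, (2 * ‖a i‖^2 + 2 * ‖b i‖^2) := Finset.sum_le_sum fun i _ => hterm i
      _ = 2 * ∑ i, ‖a i‖^2 + 2 * ∑ i, ‖b i‖^2 := by
          rw [Finset.sum_add_distrib, ← Finset.mul_sum, ← Finset.mul_sum]
      _ ≤ (N:ℝ) * (2 * L^2 * ‖w - wstar‖^2 + 2 * L^2 * ‖wt - wstar‖^2) := by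
          nlinarith [hsumA, hsumB]
  calc (1 / (N:ℝ)) * ∑ i, ‖g i w - g i wt + gradient F wt‖ ^ 2
      ≤ (1 / (N:ℝ)) * ((N:ℝ) * (2 * L^2 * ‖w - wstar‖^2 + 2 * L^2 * ‖wt - wstar‖^2)) :=
        mul_le_mul_of_nonneg_left hS (by positivity)
    _ = 2 * L^2 * ‖w - wstar‖^2 + 2 * L^2 * ‖wt - wstar‖^2 := by
        field_simp
end

section
/- Let f₁, …, f_N : ℝ^d → ℝ be differentiable with F(w) = (1/N)∑_{i=1}^N f_i(w). Suppose each gradient ∇f_i is L-Lipschitz, F is μ-strongly convex, i.e. F(x) ≥ F(y) + ⟨∇F(y), x − y⟩ + (μ/2)‖x − y‖² for all x, y, and w* ∈ ℝ^d satisfies ∇F(w*) = 0. Then for every learning rate η > 0 and all w, w̃ ∈ ℝ^d, the expected squared distance to w* after one variance-reduced SGD step satisfies (1/N)∑_{i=1}^N ‖w − η ĝ_i(w; w̃) − w*‖² ≤ (1 − 2ημ + 2η²L²)‖w − w*‖² + 2η²L²‖w̃ − w*‖², where ĝ_i(w; w̃) = ∇f_i(w) − ∇f_i(w̃) + ∇F(w̃).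 -/
open InnerProductSpace Finset

set_option maxHeartbeats 2000000

/-- If each gradient `∇ f i` is `L`-Lipschitz, `F` is `μ`-strongly convex, and
`∇F(w*) = 0`, then for every `η > 0` and all `w, wt`, the expected squared distance to
`w*` after one variance-reduced SGD step satisfies
`(1/N) ∑ i, ‖w − η ĝ_i(w; wt) − w*‖² ≤ (1 − 2ημ + 2η²L²)‖w − w*‖² + 2η²L²‖wt − w*‖²`,
where `ĝ_i(w; wt) = ∇f_i(w) − ∇f_i(wt) + ∇F(wt)`. -/
theorem stmt_7 (d N : ℕ) (hN : 1 ≤ N)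
    (f : Fin N → EuclideanSpace ℝ (Fin d) → ℝ)
    (hf : ∀ i, Differentiable ℝ (f i))
    (F : EuclideanSpace ℝ (Fin d) → ℝ)
    (hF : ∀ w, F w = (1 / (N : ℝ)) * ∑ i, f i w)
    (L μ : ℝ)
    (hLip : ∀ i x y, ‖gradient (f i) x - gradient (f i) y‖ ≤ L * ‖x - y‖)
    (hsc : ∀ x y, F x ≥ F y + (inner ℝ (gradient F y) (x - y) : ℝ)
      + μ / 2 * ‖x - y‖ ^ 2)
    (wstar : EuclideanSpace ℝ (Fin d)) (hstat : gradient F wstar = 0)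
    (η : ℝ) (hη0 : 0 < η)
    (w wt : EuclideanSpace ℝ (Fin d)) :
    (1 / (N : ℝ)) * ∑ i,
        ‖w - η • (gradient (f i) w - gradient (f i) wt + gradient F wt) - wstar‖ ^ 2
      ≤ (1 - 2 * η * μ + 2 * η ^ 2 * L ^ 2) * ‖w - wstar‖ ^ 2
        + 2 * η ^ 2 * L ^ 2 * ‖wt - wstar‖ ^ 2 := by
  have hNpos : (0:ℝ) < N := by exact_mod_cast hN
  set c : ℝ := 1 / (N : ℝ) with hc
  have hcpos : 0 < c := by positivity
  have hcN : c * N = 1 := by rw [hc]; exact one_div_mul_cancel hNpos.ne'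
  -- gradient of F is the average of the gradients of the f i
  have hgradF : ∀ x, gradient F x = c • ∑ i, gradient (f i) x := by
    intro x
    have hF' : HasFDerivAt F (c • ∑ i, fderiv ℝ (f i) x) x := by
      have h1 : HasFDerivAt (fun w => c * ∑ i, f i w)
          (c • ∑ i, fderiv ℝ (f i) x) x :=
        (HasFDerivAt.fun_sum (fun i _ => ((hf i).differentiableAt).hasFDerivAt)).const_mul _
      have h2 : F = fun w => c * ∑ i, f i w := funext hF
      rw [h2]; exact h1
    have hfd : fderiv ℝ F x = c • ∑ i, fderiv ℝ (f i) x := hF'.fderiv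
    simp only [gradient, hfd, map_smul, map_sum]
  set u := w - wstar with hu
  set ut := wt - wstar with hut
  set m := gradient F wt with hm
  set g : Fin N → EuclideanSpace ℝ (Fin d) :=
    fun i => gradient (f i) w - gradient (f i) wt + m with hg
  -- average of the g i is ∇F(w)
  have havg : c • ∑ i, g i = gradient F w := by
    have : ∑ i, g i = (∑ i, gradient (f i) w) - (∑ i, gradient (f i) wt) + (N : ℕ) • m := by
      rw [hg]
      rw [Finset.sum_add_distrib, Finset.sum_sub_distrib, Finset.sum_const,
        Finset.card_univ, Fintype.card_fin]
    rw [this, smul_add, smul_sub, ← hgradF w, ← hgradF wt]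
    have hmterm : c • ((N : ℕ) • m) = m := by
      rw [← Nat.cast_smul_eq_nsmul ℝ, smul_smul, hcN, one_smul]
    rw [hmterm, hm]
    abel
  -- average of gradients at wstar is zero
  have hzero : c • ∑ i, gradient (f i) wstar = 0 := by
    rw [← hgradF, hstat]
  -- strong convexity at the optimum: ⟪∇F w, u⟫ ≥ μ ‖u‖²
  have hsc1 := hsc wstar w
  have hsc2 := hsc w wstar
  rw [hstat] at hsc2
  have hinner : (inner ℝ (gradient F w) u : ℝ) ≥ μ * ‖u‖ ^ 2 := by
    have hrev : ‖wstar - w‖ = ‖w - wstar‖ := norm_sub_rev _ _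
    have hswap : (inner ℝ (gradient F w) (wstar - w) : ℝ)
        = - (inner ℝ (gradient F w) u : ℝ) := by
      rw [hu, ← inner_neg_right, neg_sub]
    simp only [inner_zero_left] at hsc2
    rw [hswap, hrev] at hsc1
    rw [hu] at *
    nlinarith [hsc1, hsc2]
  -- pointwise expansion of the squared norm
  have hexp : ∀ i, ‖w - η • g i - wstar‖ ^ 2
      = ‖u‖ ^ 2 - 2 * η * (inner ℝ u (g i) : ℝ) + η ^ 2 * ‖g i‖ ^ 2 := by
    intro i
    have h1 : w - η • g i - wstar = u - η • g i := by rw [hu]; abel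
    rw [h1, @norm_sub_sq_real, real_inner_smul_right, norm_smul, mul_pow, Real.norm_eq_abs,
      sq_abs]
    ring
  -- bound on the average of ‖g i‖²
  have hgb : c * ∑ i, ‖g i‖ ^ 2 ≤ 2 * L ^ 2 * ‖u‖ ^ 2 + 2 * L ^ 2 * ‖ut‖ ^ 2 := by
    set X : Fin N → EuclideanSpace ℝ (Fin d) := fun i => gradient (f i) wt - gradient (f i) wstar
      with hX
    have hXavg : c • ∑ i, X i = m := by
      rw [hX]
      simp only [Finset.sum_sub_distrib, smul_sub]
      rw [← hgradF wt, hzero, hm, sub_zero]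
    set A : Fin N → EuclideanSpace ℝ (Fin d) := fun i => gradient (f i) w - gradient (f i) wstar
      with hA
    have hgi : ∀ i, g i = A i - (X i - m) := by
      intro i; rw [hA, hX, hg]; beta_reduce; abel
    have hAb : ∀ i, ‖A i‖ ^ 2 ≤ L ^ 2 * ‖u‖ ^ 2 := by
      intro i
      have h := hLip i w wstar
      calc ‖A i‖ ^ 2 ≤ (L * ‖w - wstar‖) ^ 2 := by
            exact pow_le_pow_left₀ (norm_nonneg _) h 2
        _ = L ^ 2 * ‖u‖ ^ 2 := by rw [mul_pow, hu]
    have hXb : ∀ i, ‖X i‖ ^ 2 ≤ L ^ 2 * ‖ut‖ ^ 2 := by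
      intro i
      have h := hLip i wt wstar
      calc ‖X i‖ ^ 2 ≤ (L * ‖wt - wstar‖) ^ 2 := by
            exact pow_le_pow_left₀ (norm_nonneg _) h 2
        _ = L ^ 2 * ‖ut‖ ^ 2 := by rw [mul_pow, hut]
    have hsplit : ∀ i, ‖g i‖ ^ 2 ≤ 2 * ‖A i‖ ^ 2 + 2 * ‖X i - m‖ ^ 2 := by
      intro i
      rw [hgi i]
      calc ‖A i - (X i - m)‖ ^ 2 ≤ (‖A i‖ + ‖X i - m‖) ^ 2 :=
            pow_le_pow_left₀ (norm_nonneg _) (norm_sub_le _ _) 2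
        _ ≤ 2 * ‖A i‖ ^ 2 + 2 * ‖X i - m‖ ^ 2 := by
            nlinarith [sq_nonneg (‖A i‖ - ‖X i - m‖)]
    -- variance bound: c * ∑ ‖X i - m‖² ≤ c * ∑ ‖X i‖²
    have hvar : c * ∑ i, ‖X i - m‖ ^ 2 ≤ c * ∑ i, ‖X i‖ ^ 2 := by
      have hexp2 : ∀ i, ‖X i - m‖ ^ 2
          = ‖X i‖ ^ 2 - 2 * (inner ℝ (X i) m : ℝ) + ‖m‖ ^ 2 := fun i => @norm_sub_sq_real _ _ _ _ _
      have hsum : ∑ i, ‖X i - m‖ ^ 2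
          = ∑ i, ‖X i‖ ^ 2 - 2 * (inner ℝ (∑ i, X i) m : ℝ) + N * ‖m‖ ^ 2 := by
        simp only [hexp2]
        rw [Finset.sum_add_distrib, Finset.sum_sub_distrib, ← Finset.mul_sum, ← sum_inner,
          Finset.sum_const, Finset.card_univ, Fintype.card_fin, nsmul_eq_mul]
      have hinnXm : c * (inner ℝ (∑ i, X i) m : ℝ) = ‖m‖ ^ 2 := by
        rw [← real_inner_smul_left, hXavg, real_inner_self_eq_norm_sq]
      have hmn : 0 ≤ ‖m‖ ^ 2 := by positivity
      rw [hsum]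
      have : c * (∑ i, ‖X i‖ ^ 2 - 2 * (inner ℝ (∑ i, X i) m : ℝ) + N * ‖m‖ ^ 2)
          = c * ∑ i, ‖X i‖ ^ 2 - 2 * (c * (inner ℝ (∑ i, X i) m : ℝ)) + (c * N) * ‖m‖ ^ 2 := by
        ring
      rw [this, hinnXm, hcN]
      nlinarith
    have h1 : c * ∑ i, ‖g i‖ ^ 2 ≤ c * ∑ i, (2 * ‖A i‖ ^ 2 + 2 * ‖X i - m‖ ^ 2) := by
      apply mul_le_mul_of_nonneg_left _ (le_of_lt hcpos)
      exact Finset.sum_le_sum fun i _ => hsplit i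
    have h2 : c * ∑ i, (2 * ‖A i‖ ^ 2 + 2 * ‖X i - m‖ ^ 2)
        = 2 * (c * ∑ i, ‖A i‖ ^ 2) + 2 * (c * ∑ i, ‖X i - m‖ ^ 2) := by
      rw [Finset.sum_add_distrib, ← Finset.mul_sum, ← Finset.mul_sum]
      ring
    have h3 : c * ∑ i, ‖A i‖ ^ 2 ≤ L ^ 2 * ‖u‖ ^ 2 := by
      calc c * ∑ i, ‖A i‖ ^ 2 ≤ c * ∑ _i : Fin N, L ^ 2 * ‖u‖ ^ 2 := by
            apply mul_le_mul_of_nonneg_left _ (le_of_lt hcpos)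
            exact Finset.sum_le_sum fun i _ => hAb i
        _ = L ^ 2 * ‖u‖ ^ 2 := by
            rw [Finset.sum_const, Finset.card_univ, Fintype.card_fin, nsmul_eq_mul,
              ← mul_assoc, hcN, one_mul]
    have h4 : c * ∑ i, ‖X i‖ ^ 2 ≤ L ^ 2 * ‖ut‖ ^ 2 := by
      calc c * ∑ i, ‖X i‖ ^ 2 ≤ c * ∑ _i : Fin N, L ^ 2 * ‖ut‖ ^ 2 := by
            apply mul_le_mul_of_nonneg_left _ (le_of_lt hcpos)
            exact Finset.sum_le_sum fun i _ => hXb i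
        _ = L ^ 2 * ‖ut‖ ^ 2 := by
            rw [Finset.sum_const, Finset.card_univ, Fintype.card_fin, nsmul_eq_mul,
              ← mul_assoc, hcN, one_mul]
    linarith
  -- put everything together
  have hLHS : c * ∑ i, ‖w - η • g i - wstar‖ ^ 2
      = ‖u‖ ^ 2 - 2 * η * (inner ℝ u (gradient F w) : ℝ) + η ^ 2 * (c * ∑ i, ‖g i‖ ^ 2) := by
    have hs : ∑ i, ‖w - η • g i - wstar‖ ^ 2
        = ∑ i, (‖u‖ ^ 2 - 2 * η * (inner ℝ u (g i) : ℝ) + η ^ 2 * ‖g i‖ ^ 2) :=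
      Finset.sum_congr rfl fun i _ => hexp i
    rw [hs, Finset.sum_add_distrib, Finset.sum_sub_distrib, Finset.sum_const,
      Finset.card_univ, Fintype.card_fin, nsmul_eq_mul]
    have hi1 : ∑ i, 2 * η * (inner ℝ u (g i) : ℝ) = 2 * η * (inner ℝ u (∑ i, g i) : ℝ) := by
      rw [inner_sum, Finset.mul_sum]
    have hi2 : c * (inner ℝ u (∑ i, g i) : ℝ) = (inner ℝ u (gradient F w) : ℝ) := by
      rw [← real_inner_smul_right, havg]
    rw [hi1, ← Finset.mul_sum]
    have : c * ((N : ℝ) * ‖u‖ ^ 2 - 2 * η * (inner ℝ u (∑ i, g i) : ℝ)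
        + η ^ 2 * ∑ i, ‖g i‖ ^ 2)
        = (c * N) * ‖u‖ ^ 2 - 2 * η * (c * (inner ℝ u (∑ i, g i) : ℝ))
        + η ^ 2 * (c * ∑ i, ‖g i‖ ^ 2) := by ring
    rw [this, hi2, hcN, one_mul]
  rw [hLHS]
  have hcomm : (inner ℝ u (gradient F w) : ℝ) = (inner ℝ (gradient F w) u : ℝ) :=
    real_inner_comm _ _
  rw [hcomm]
  nlinarith [sq_nonneg η, hinner, hgb, sq_nonneg (‖u‖), mul_le_mul_of_nonneg_left hgb (sq_nonneg η)]
end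

section
/- 【Corollary】 Under the hypotheses of Theorem 1 — d ≥ 1, N ≥ 1, f₁, …, f_N : ℝ^d → ℝ differentiable with F(w) = (1/N)∑_{i=1}^N f_i(w), each f_i L_i-smooth with L-Lipschitz gradient and L = max{L₁, …, L_N}, F μ-strongly convex (μ > 0) with minimizer w*, θ ∈ (0,1], η ∈ (0, μθ/(2L²)), delays bounded by τ, m large enough that γ = (1 − 2η(μ − ηL²/θ))^{m/(1+τ)} + ηL²/(θμ − ηL²) < 1, and w̃^S the output after S stages of the distributed variance-reduced SGD recursion w^{t+1} = (1−θ)(w^t − η ĝ_{i_t}(w^{t−τ_t}; w̃^{s−1})) + θ(w^{t−τ_t} − η ĝ_{i_t}(w^{t−τ_t}; w̃^{s−1})) with i.i.d. uniform indices — the iterates converge linearly to w*: E‖w̃^S − w*‖² ≤ 2γ^S (F(w̃^0) − F(w*)) / μ. -/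
open Finset InnerProductSpace


open Finset

lemma aux_young (θ η L np nd : ℝ) (hθ0 : 0 < θ) (hθ1 : θ ≤ 1) :
    2 * η * ((1-θ) * (L * (np * nd)))
      ≤ θ * (1-θ) * nd^2 + η^2 * L^2 * (1-θ) / θ * np^2 := by
  have key : 0 ≤ (1-θ)/θ * (θ*nd - η*L*np)^2 :=
    mul_nonneg (div_nonneg (by linarith) hθ0.le) (sq_nonneg _)
  have expand : (1-θ)/θ * (θ*nd - η*L*np)^2
      = θ * (1-θ) * nd^2 - 2 * η * ((1-θ) * (L * (np * nd)))
        + η^2 * L^2 * (1-θ) / θ * np^2 := by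
    field_simp
    ring
  linarith [expand ▸ key]

lemma aux_comb {E : Type*} [NormedAddCommGroup E] [InnerProductSpace ℝ E]
    (θ : ℝ) (x y : E) :
    ‖(1 - θ) • x + θ • y‖ ^ 2
      = (1 - θ) * ‖x‖ ^ 2 + θ * ‖y‖ ^ 2 - θ * (1 - θ) * ‖x - y‖ ^ 2 := by
  have h1 : ∀ v : E, ‖v‖ ^ 2 = (inner ℝ v v : ℝ) := fun v => (real_inner_self_eq_norm_sq v).symm
  rw [h1, h1, h1, h1]
  simp only [inner_add_add_self, inner_sub_sub_self, real_inner_smul_left,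
    real_inner_smul_right]
  ring_nf

lemma aux_expand {E : Type*} [NormedAddCommGroup E] [InnerProductSpace ℝ E]
    (η : ℝ) (a g : E) :
    ‖a - η • g‖ ^ 2 = ‖a‖ ^ 2 - 2 * η * (inner ℝ g a : ℝ) + η ^ 2 * ‖g‖ ^ 2 := by
  rw [norm_sub_sq_real, real_inner_smul_right, norm_smul]
  simp only [mul_pow, sq_abs, Real.norm_eq_abs]
  rw [real_inner_comm a g]
  ring

lemma aux_var {E : Type*} [NormedAddCommGroup E] [InnerProductSpace ℝ E]
    {N : ℕ} (Y : Fin N → E) (c : E) (hc : ∑ j, Y j = (N : ℝ) • c) :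
    ∑ j, ‖Y j - c‖ ^ 2 ≤ ∑ j, ‖Y j‖ ^ 2 := by
  have expand : ∀ j, ‖Y j - c‖ ^ 2
      = ‖Y j‖ ^ 2 - 2 * (inner ℝ (Y j) c : ℝ) + ‖c‖ ^ 2 := fun j => norm_sub_sq_real _ _
  have hsum : ∑ j, (inner ℝ (Y j) c : ℝ) = (N : ℝ) * ‖c‖ ^ 2 := by
    rw [← sum_inner, hc, real_inner_smul_left, real_inner_self_eq_norm_sq]
  calc ∑ j, ‖Y j - c‖ ^ 2
      = ∑ j, ‖Y j‖ ^ 2 - 2 * ((N:ℝ) * ‖c‖^2) + (N:ℝ) * ‖c‖ ^ 2 := by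
        simp only [expand]
        rw [Finset.sum_add_distrib, Finset.sum_sub_distrib, ← Finset.mul_sum, hsum]
        simp [Finset.card_univ]
    _ ≤ ∑ j, ‖Y j‖ ^ 2 := by nlinarith [sq_nonneg ‖c‖, Nat.cast_nonneg (α := ℝ) N]

set_option maxHeartbeats 1000000 in
/-- The core one-step inequality, pointwise in the "past". -/
lemma aux_core {E : Type*} [NormedAddCommGroup E] [InnerProductSpace ℝ E]
    {N : ℕ} (hN : 1 ≤ N)
    (gf : Fin N → E → E) (gF : E → E) (wstar : E)
    (L μ θ η : ℝ)
    (hgF : ∀ x, ∑ j, gf j x = (N : ℝ) • gF x)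
    (hzero : gF wstar = 0)
    (hLip : ∀ j x y, ‖gf j x - gf j y‖ ≤ L * ‖x - y‖)
    (hFLip : ∀ x y, ‖gF x - gF y‖ ≤ L * ‖x - y‖)
    (hmono : ∀ x, μ * ‖x - wstar‖^2 ≤ (inner ℝ (gF x) (x - wstar) : ℝ))
    (hθ0 : 0 < θ) (hθ1 : θ ≤ 1) (hη0 : 0 < η) (hL0 : 0 < L)
    (w p wt : E) :
    (N : ℝ)⁻¹ * ∑ j, ‖(1 - θ) • (w - η • (gf j p - gf j wt + gF wt))
        + θ • (p - η • (gf j p - gf j wt + gF wt)) - wstar‖ ^ 2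
      ≤ (1 - θ) * ‖w - wstar‖^2
        + (θ - 2*η*μ + 2*η^2*L^2 + η^2*L^2*(1-θ)/θ) * ‖p - wstar‖^2
        + 2*η^2*L^2 * ‖wt - wstar‖^2 := by
  have hNR : (0:ℝ) < (N:ℝ) := by exact_mod_cast hN
  obtain ⟨g, hg⟩ : ∃ g : Fin N → E, g = fun j => gf j p - gf j wt + gF wt := ⟨_, rfl⟩
  obtain ⟨u, hu⟩ : ∃ u : E, u = (1 - θ) • (w - wstar) + θ • (p - wstar) := ⟨_, rfl⟩
  -- rewrite each summand
  have hexp : ∀ j, ‖(1 - θ) • (w - η • (gf j p - gf j wt + gF wt))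
        + θ • (p - η • (gf j p - gf j wt + gF wt)) - wstar‖ ^ 2
      = ‖u‖^2 - 2*η*(inner ℝ (g j) u : ℝ) + η^2 * ‖g j‖^2 := by
    intro j
    have hsummand : (1 - θ) • (w - η • (gf j p - gf j wt + gF wt))
        + θ • (p - η • (gf j p - gf j wt + gF wt)) - wstar = u - η • g j := by
      rw [hu, hg]; module
    rw [hsummand, aux_expand]
  -- sum of gradients
  have hgsum : ∑ j, g j = (N:ℝ) • gF p := by
    rw [hg]
    simp only [Finset.sum_add_distrib, Finset.sum_sub_distrib, hgF, Finset.sum_const,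
      Finset.card_univ, Fintype.card_fin]
    rw [← Nat.cast_smul_eq_nsmul ℝ]
    module
  -- variance bound
  have hvar : ∑ j, ‖g j‖^2 ≤ (N:ℝ) * (2*L^2*‖p - wstar‖^2 + 2*L^2*‖wt - wstar‖^2) := by
    obtain ⟨A, hA⟩ : ∃ A : Fin N → E, A = fun j => gf j p - gf j wstar := ⟨_, rfl⟩
    obtain ⟨Y, hY⟩ : ∃ Y : Fin N → E, Y = fun j => gf j wt - gf j wstar := ⟨_, rfl⟩
    have hgj : ∀ j, g j = A j - (Y j - gF wt) := by intro j; rw [hg, hA, hY]; module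
    have hsq : ∀ j, ‖g j‖^2 ≤ 2*‖A j‖^2 + 2*‖Y j - gF wt‖^2 := by
      intro j
      rw [hgj j]
      have h := norm_sub_le (A j) (Y j - gF wt)
      have h0 := norm_nonneg (A j - (Y j - gF wt))
      nlinarith [sq_nonneg (‖A j‖ - ‖Y j - gF wt‖), mul_self_le_mul_self h0 h]
    have hAsum : ∑ j, ‖A j‖^2 ≤ (N:ℝ) * (L^2 * ‖p - wstar‖^2) := by
      calc ∑ j, ‖A j‖^2 ≤ ∑ _j : Fin N, L^2 * ‖p - wstar‖^2 := by
            apply Finset.sum_le_sum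
            intro j _
            have h1 := hLip j p wstar
            have h2 : A j = gf j p - gf j wstar := by rw [hA]
            rw [h2]
            nlinarith [norm_nonneg (gf j p - gf j wstar), norm_nonneg (p - wstar), hL0.le]
        _ = (N:ℝ) * (L^2 * ‖p - wstar‖^2) := by simp [Finset.card_univ]
    have hYsum : ∑ j, ‖Y j - gF wt‖^2 ≤ (N:ℝ) * (L^2 * ‖wt - wstar‖^2) := by
      have hYc : ∑ j, Y j = (N:ℝ) • gF wt := by
        rw [hY]
        simp only [Finset.sum_sub_distrib, hgF, hzero]
        module
      calc ∑ j, ‖Y j - gF wt‖^2 ≤ ∑ j, ‖Y j‖^2 := aux_var Y (gF wt) hYc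
        _ ≤ ∑ _j : Fin N, L^2 * ‖wt - wstar‖^2 := by
            apply Finset.sum_le_sum
            intro j _
            have h1 := hLip j wt wstar
            have h2 : Y j = gf j wt - gf j wstar := by rw [hY]
            rw [h2]
            nlinarith [norm_nonneg (gf j wt - gf j wstar), norm_nonneg (wt - wstar), hL0.le]
        _ = (N:ℝ) * (L^2 * ‖wt - wstar‖^2) := by simp [Finset.card_univ]
    calc ∑ j, ‖g j‖^2 ≤ ∑ j, (2*‖A j‖^2 + 2*‖Y j - gF wt‖^2) := Finset.sum_le_sum fun j _ => hsq j
      _ = 2 * ∑ j, ‖A j‖^2 + 2 * ∑ j, ‖Y j - gF wt‖^2 := by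
          rw [Finset.sum_add_distrib, Finset.mul_sum, Finset.mul_sum]
      _ ≤ (N:ℝ) * (2*L^2*‖p - wstar‖^2 + 2*L^2*‖wt - wstar‖^2) := by nlinarith
  -- inner ℝ product bound
  have hIP : μ * ‖p - wstar‖^2 - (1-θ) * (L * (‖p - wstar‖ * ‖w - p‖))
      ≤ (inner ℝ (gF p) u : ℝ) := by
    have hu2 : u = (p - wstar) + (1 - θ) • (w - p) := by rw [hu]; module
    rw [hu2, inner_add_right, real_inner_smul_right]
    have h1 : μ * ‖p - wstar‖^2 ≤ (inner ℝ (gF p) (p - wstar) : ℝ) := hmono p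
    have h2 : |(inner ℝ (gF p) (w - p) : ℝ)| ≤ L * ‖p - wstar‖ * ‖w - p‖ := by
      calc |(inner ℝ (gF p) (w - p) : ℝ)| ≤ ‖gF p‖ * ‖w - p‖ := abs_real_inner_le_norm _ _
        _ ≤ L * ‖p - wstar‖ * ‖w - p‖ := by
            have h3 : ‖gF p‖ ≤ L * ‖p - wstar‖ := by
              have := hFLip p wstar
              rwa [hzero, sub_zero] at this
            exact mul_le_mul_of_nonneg_right h3 (norm_nonneg _)
    have h4 : -(L * ‖p - wstar‖ * ‖w - p‖) ≤ (inner ℝ (gF p) (w - p) : ℝ) := by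
      have := neg_abs_le (inner ℝ (gF p) (w - p) : ℝ)
      linarith
    have h5 := mul_le_mul_of_nonneg_left h4 (sub_nonneg.2 hθ1)
    linarith [h1, h5]
  -- sum it all up
  have hLHS : (N : ℝ)⁻¹ * ∑ j, ‖(1 - θ) • (w - η • (gf j p - gf j wt + gF wt))
        + θ • (p - η • (gf j p - gf j wt + gF wt)) - wstar‖ ^ 2
      = ‖u‖^2 - 2*η*(inner ℝ (gF p) u : ℝ) + η^2 * ((N:ℝ)⁻¹ * ∑ j, ‖g j‖^2) := by
    have hsum1 : ∑ j, ‖(1 - θ) • (w - η • (gf j p - gf j wt + gF wt))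
        + θ • (p - η • (gf j p - gf j wt + gF wt)) - wstar‖ ^ 2
        = (N:ℝ)*‖u‖^2 - 2*η*((N:ℝ) * (inner ℝ (gF p) u : ℝ)) + η^2 * ∑ j, ‖g j‖^2 := by
      simp only [hexp]
      rw [Finset.sum_add_distrib, Finset.sum_sub_distrib, ← Finset.mul_sum, ← Finset.mul_sum,
        ← sum_inner, hgsum, real_inner_smul_left]
      simp [Finset.card_univ]
    rw [hsum1]
    have hne : (N:ℝ) ≠ 0 := ne_of_gt hNR
    generalize ‖u‖^2 = X
    generalize (inner ℝ (gF p) u : ℝ) = I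
    generalize (∑ j, ‖g j‖^2 : ℝ) = G
    field_simp
  rw [hLHS]
  have hucomb : ‖u‖^2 = (1-θ)*‖w - wstar‖^2 + θ*‖p - wstar‖^2 - θ*(1-θ)*‖w - p‖^2 := by
    rw [hu, aux_comb]
    congr 2
    abel
  have hvar' : (N:ℝ)⁻¹ * ∑ j, ‖g j‖^2 ≤ 2*L^2*‖p - wstar‖^2 + 2*L^2*‖wt - wstar‖^2 := by
    rw [inv_mul_le_iff₀ hNR]
    linarith [hvar]
  have hyoung := aux_young θ η L ‖p - wstar‖ ‖w - p‖ hθ0 hθ1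
  have e1 := mul_le_mul_of_nonneg_left hIP (by linarith : (0:ℝ) ≤ 2*η)
  have e2 := mul_le_mul_of_nonneg_left hvar' (sq_nonneg η)
  rw [hucomb]
  linarith [e1, e2, hyoung]


/-- Feyzmahdavian-type sequence lemma. -/
lemma aux_seq (V : ℕ → ℝ) (a b c₁ c₂ : ℝ) (τ m : ℕ) (k : ℕ → ℕ)
    (hV : ∀ t, 0 ≤ V t) (ha0 : 0 < a) (ha1 : a < 1) (hb : 0 ≤ b)
    (hc₁ : 0 ≤ c₁) (hc₂ : 0 ≤ c₂) (hc : c₁ + c₂ ≤ a)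
    (hk : ∀ t < m, t - τ ≤ k t ∧ k t ≤ t)
    (hrec : ∀ t < m, V (t + 1) ≤ c₁ * V t + c₂ * V (k t) + b) :
    V m ≤ a ^ ((m : ℝ) / (1 + (τ : ℝ))) * V 0 + b / (1 - a) := by
  set ρ : ℝ := a ^ ((1 : ℝ) / (1 + (τ : ℝ))) with hρ
  have hτpos : (0:ℝ) < 1 + (τ:ℝ) := by positivity
  have hρ0 : 0 < ρ := Real.rpow_pos_of_pos ha0 _
  have hρ1 : ρ ≤ 1 := Real.rpow_le_one ha0.le ha1.le (by positivity)
  have hρa : ρ ^ (1 + τ) = a := by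
    rw [hρ, ← Real.rpow_natCast (a ^ ((1:ℝ)/(1+(τ:ℝ)))) (1+τ), ← Real.rpow_mul ha0.le]
    rw [show ((1:ℝ)/(1+(τ:ℝ))) * ((1+τ : ℕ) : ℝ) = 1 by push_cast; field_simp]
    exact Real.rpow_one a
  have hcc : 0 ≤ b / (1 - a) := div_nonneg hb (by linarith)
  set c : ℝ := b / (1 - a) with hc'
  have hacb : a * c + b = c := by
    have h1a : (1:ℝ) - a ≠ 0 := by linarith
    rw [hc', mul_div_assoc', div_add' _ _ _ h1a]
    congr 1
    ring
  -- main induction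
  have main : ∀ t, t ≤ m → V t ≤ ρ ^ t * V 0 + c := by
    intro t
    induction t using Nat.strong_induction_on with
    | _ t ih =>
      match t with
      | 0 => intro _; simpa using by nlinarith [hV 0]
      | (t+1) =>
        intro htm
        have htm' : t < m := htm
        have h1 : V t ≤ ρ ^ t * V 0 + c := ih t (Nat.lt_succ_self t) (le_of_lt htm')
        have h2 : V (k t) ≤ ρ ^ (k t) * V 0 + c :=
          ih (k t) (Nat.lt_succ_of_le (hk t htm').2) (le_trans (hk t htm').2 htm'.le)
        have hmono : ∀ i j : ℕ, i ≤ j → ρ ^ j ≤ ρ ^ i := fun i j hij =>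
          pow_le_pow_of_le_one hρ0.le hρ1 hij
        have h3 : ρ ^ t ≤ ρ ^ (t - τ) := hmono _ _ (Nat.sub_le t τ)
        have h4 : ρ ^ (k t) ≤ ρ ^ (t - τ) := hmono _ _ (hk t htm').1
        have h5 : a * ρ ^ (t - τ) ≤ ρ ^ (t + 1) := by
          calc a * ρ ^ (t - τ) = ρ ^ (1 + τ) * ρ ^ (t - τ) := by rw [hρa]
            _ = ρ ^ (1 + τ + (t - τ)) := by rw [← pow_add]
            _ ≤ ρ ^ (t + 1) := hmono _ _ (by omega)
        have hV0 : 0 ≤ V 0 := hV 0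
        calc V (t+1) ≤ c₁ * V t + c₂ * V (k t) + b := hrec t htm'
          _ ≤ c₁ * (ρ ^ (t-τ) * V 0 + c) + c₂ * (ρ ^ (t-τ) * V 0 + c) + b := by
              have e1 : V t ≤ ρ ^ (t-τ) * V 0 + c := h1.trans (by nlinarith)
              have e2 : V (k t) ≤ ρ ^ (t-τ) * V 0 + c := h2.trans (by nlinarith)
              nlinarith
          _ = (c₁ + c₂) * (ρ ^ (t-τ) * V 0 + c) + b := by ring
          _ ≤ a * (ρ ^ (t-τ) * V 0 + c) + b := by
              have : 0 ≤ ρ ^ (t-τ) * V 0 + c := by positivity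
              nlinarith
          _ = (a * ρ ^ (t-τ)) * V 0 + (a * c + b) := by ring
          _ ≤ ρ ^ (t+1) * V 0 + c := by rw [hacb]; nlinarith
  have hfin := main m le_rfl
  have : ρ ^ m = a ^ ((m:ℝ) / (1 + (τ:ℝ))) := by
    rw [hρ, ← Real.rpow_natCast (a ^ ((1:ℝ)/(1+(τ:ℝ)))) m, ← Real.rpow_mul ha0.le]
    ring_nf
  rwa [this] at hfin



/-- Conditional expectation over one coordinate of a product index space. -/
lemma aux_cond {S m N : ℕ} (s : Fin S) (t : Fin m)
    (r : (Fin S → Fin m → Fin N) → Fin N → ℝ)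
    (hr : ∀ ι j' j, r (Function.update ι s (Function.update (ι s) t j')) j = r ι j) :
    (N : ℝ) * ∑ ι : Fin S → Fin m → Fin N, r ι (ι s t)
      = ∑ ι : Fin S → Fin m → Fin N, ∑ j, r ι j := by
  classical
  set upd : (Fin S → Fin m → Fin N) → Fin N → (Fin S → Fin m → Fin N) :=
    fun ι j => Function.update ι s (Function.update (ι s) t j) with hupd
  have hupd_eval : ∀ ι j, (upd ι j) s t = j := by
    intro ι j; simp [hupd]
  have hupd_self : ∀ ι, upd ι (ι s t) = ι := by
    intro ι; simp [hupd]
  have hupd_upd : ∀ ι j' j, upd (upd ι j') j = upd ι j := by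
    intro ι j' j
    simp [hupd, Function.update_idem]
  -- involution on Fin N × α
  set φ : Fin N × (Fin S → Fin m → Fin N) → Fin N × (Fin S → Fin m → Fin N) :=
    fun p => (p.2 s t, upd p.2 p.1) with hφ
  have hinv : Function.Involutive φ := by
    intro p
    simp only [hφ, hupd_eval]
    rw [hupd_upd, hupd_self]
  have key : ∑ p : Fin N × (Fin S → Fin m → Fin N), r p.2 (p.2 s t)
      = ∑ p : Fin N × (Fin S → Fin m → Fin N), r p.2 p.1 := by
    rw [← Fintype.sum_bijective φ hinv.bijective _ (fun p => r p.2 (p.2 s t)) (fun p => rfl)]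
    congr 1
    funext p
    simp only [hφ, hupd_eval]
    exact hr p.2 p.1 _
  rw [Fintype.sum_prod_type] at key
  rw [Fintype.sum_prod_type] at key
  simp only [Finset.sum_const, card_univ, Fintype.card_fin, nsmul_eq_mul] at key
  rw [key, Finset.sum_comm]



lemma aux_grad_avg {d N : ℕ} (f : Fin N → EuclideanSpace ℝ (Fin d) → ℝ)
    (hf : ∀ i, Differentiable ℝ (f i))
    (F : EuclideanSpace ℝ (Fin d) → ℝ)
    (hF : ∀ w, F w = (1 / (N : ℝ)) * ∑ i, f i w) (w : EuclideanSpace ℝ (Fin d)) :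
    gradient F w = (1 / (N : ℝ)) • ∑ i, gradient (f i) w := by
  have hFe : F = fun w => (1 / (N : ℝ)) * ∑ i, f i w := funext hF
  have hds : DifferentiableAt ℝ (fun w : EuclideanSpace ℝ (Fin d) => ∑ i, f i w) w := by
    apply DifferentiableAt.fun_sum; intro i _; exact (hf i).differentiableAt
  have h1 : fderiv ℝ F w = (1 / (N : ℝ)) • fderiv ℝ (fun w => ∑ i, f i w) w := by
    rw [hFe]
    exact fderiv_const_mul hds _
  have h2 : fderiv ℝ (fun w : EuclideanSpace ℝ (Fin d) => ∑ i, f i w) w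
      = ∑ i, fderiv ℝ (f i) w := by
    rw [fderiv_fun_sum]; intro i _; exact (hf i).differentiableAt
  unfold gradient
  rw [h1, h2, map_smul, map_sum]

lemma aux_grad_zero {d : ℕ} (F : EuclideanSpace ℝ (Fin d) → ℝ)
    (wstar : EuclideanSpace ℝ (Fin d)) (hmin : ∀ w, F wstar ≤ F w) :
    gradient F wstar = 0 := by
  have h : IsLocalMin F wstar := by
    apply IsMinOn.isLocalMin (s := Set.univ)
    · intro x _; exact hmin x
    · exact Filter.univ_mem
  unfold gradient
  rw [h.fderiv_eq_zero, map_zero]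

set_option maxHeartbeats 1000000 in
/-- **Corollary.** Under the hypotheses of Theorem 1, the iterates of the distributed
variance-reduced SGD recursion converge linearly to the minimizer `w*`:
`E‖w̃^S − w*‖² ≤ 2 γ^S (F(w̃^0) − F(w*)) / μ`. -/
theorem stmt_10 (d N : ℕ) (hd : 1 ≤ d) (hN : 1 ≤ N)
    (f : Fin N → EuclideanSpace ℝ (Fin d) → ℝ)
    (hf : ∀ i, Differentiable ℝ (f i))
    (F : EuclideanSpace ℝ (Fin d) → ℝ)
    (hF : ∀ w, F w = (1 / (N : ℝ)) * ∑ i, f i w)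
    (Li : Fin N → ℝ) (L μ θ η : ℝ)
    (hsmooth : ∀ i x y, f i x ≤ f i y + (inner ℝ (gradient (f i) y) (x - y) : ℝ)
      + Li i / 2 * ‖x - y‖ ^ 2)
    (hLip : ∀ i x y, ‖gradient (f i) x - gradient (f i) y‖ ≤ L * ‖x - y‖)
    (hL : IsGreatest (Set.range Li) L)
    (hμ0 : 0 < μ)
    (hsc : ∀ x y, F x ≥ F y + (inner ℝ (gradient F y) (x - y) : ℝ)
      + μ / 2 * ‖x - y‖ ^ 2)
    (wstar : EuclideanSpace ℝ (Fin d)) (hmin : ∀ w, F wstar ≤ F w)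
    (hθ0 : 0 < θ) (hθ1 : θ ≤ 1)
    (hη0 : 0 < η) (hη : η < μ * θ / (2 * L ^ 2))
    (τ m S : ℕ) (hm : 1 ≤ m)
    (del : Fin S → ℕ → ℕ) (hdel : ∀ s t, t < m → del s t ≤ min τ t)
    (γ : ℝ)
    (hγ : γ = (1 - 2 * η * (μ - η * L ^ 2 / θ)) ^ ((m : ℝ) / (1 + (τ : ℝ)))
      + η * L ^ 2 / (θ * μ - η * L ^ 2))
    (hγ1 : γ < 1)
    (w0 : EuclideanSpace ℝ (Fin d))
    -- `wtil ι s` is the stage output `w̃^s`, and `W ι s t` is the inner ℝ iterate `w^t`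
    -- of stage `s+1`, both for the index sequence `ι` (`ι s t` is the index `i_t`
    -- drawn in stage `s+1`; the expectation is uniform over all such sequences).
    (wtil : (Fin S → Fin m → Fin N) → ℕ → EuclideanSpace ℝ (Fin d))
    (W : (Fin S → Fin m → Fin N) → Fin S → ℕ → EuclideanSpace ℝ (Fin d))
    (hw0 : ∀ ι, wtil ι 0 = w0)
    (hstart : ∀ ι (s : Fin S), W ι s 0 = wtil ι s.val)
    (hrec : ∀ ι (s : Fin S) (t : ℕ) (ht : t < m),
      W ι s (t + 1) =
        (1 - θ) • (W ι s t - η • (gradient (f (ι s ⟨t, ht⟩)) (W ι s (t - del s t))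
            - gradient (f (ι s ⟨t, ht⟩)) (wtil ι s.val) + gradient F (wtil ι s.val)))
        + θ • (W ι s (t - del s t) - η • (gradient (f (ι s ⟨t, ht⟩)) (W ι s (t - del s t))
            - gradient (f (ι s ⟨t, ht⟩)) (wtil ι s.val) + gradient F (wtil ι s.val))))
    (hout : ∀ ι (s : Fin S), wtil ι (s.val + 1) = W ι s m) :
    (1 / (N : ℝ) ^ (S * m)) * ∑ ι : Fin S → Fin m → Fin N, ‖wtil ι S - wstar‖ ^ 2
      ≤ 2 * γ ^ S * (F w0 - F wstar) / μ := by
  classical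
  have hNR : (0:ℝ) < (N:ℝ) := by exact_mod_cast hN
  -- gradient of F as an average
  have hgF : ∀ x, ∑ j, gradient (f j) x = (N : ℝ) • gradient F x := by
    intro x
    rw [aux_grad_avg f hf F hF x, smul_smul]
    rw [mul_one_div, div_self (ne_of_gt hNR), one_smul]
  have hzero : gradient F wstar = 0 := aux_grad_zero F wstar hmin
  -- Lipschitz gradient of F
  have hFLip : ∀ x y, ‖gradient F x - gradient F y‖ ≤ L * ‖x - y‖ := by
    intro x y
    have h1 : gradient F x - gradient F y
        = (1 / (N : ℝ)) • ∑ j, (gradient (f j) x - gradient (f j) y) := by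
      rw [aux_grad_avg f hf F hF x, aux_grad_avg f hf F hF y, Finset.sum_sub_distrib, smul_sub]
    rw [h1, norm_smul]
    have h2 : ‖∑ j, (gradient (f j) x - gradient (f j) y)‖ ≤ (N:ℝ) * (L * ‖x - y‖) := by
      calc ‖∑ j, (gradient (f j) x - gradient (f j) y)‖
          ≤ ∑ j, ‖gradient (f j) x - gradient (f j) y‖ := norm_sum_le _ _
        _ ≤ ∑ _j : Fin N, L * ‖x - y‖ := Finset.sum_le_sum fun j _ => hLip j x y
        _ = (N:ℝ) * (L * ‖x - y‖) := by simp [Finset.card_univ]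
    calc ‖(1 / (N:ℝ))‖ * ‖∑ j, (gradient (f j) x - gradient (f j) y)‖
        ≤ ‖(1 / (N:ℝ))‖ * ((N:ℝ) * (L * ‖x - y‖)) :=
          mul_le_mul_of_nonneg_left h2 (norm_nonneg _)
      _ = L * ‖x - y‖ := by
          rw [Real.norm_eq_abs, abs_of_pos (by positivity : (0:ℝ) < 1/(N:ℝ))]
          field_simp
  -- strong monotonicity of the gradient of F at wstar
  have hmono : ∀ x, μ * ‖x - wstar‖^2 ≤ (inner ℝ (gradient F x) (x - wstar) : ℝ) := by
    intro x
    have h1 := hsc wstar x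
    have h2 := hsc x wstar
    rw [hzero] at h2
    simp only [inner_zero_left] at h2
    have h3 : (inner ℝ (gradient F x) (wstar - x) : ℝ)
        = -(inner ℝ (gradient F x) (x - wstar) : ℝ) := by
      rw [show wstar - x = -(x - wstar) by abel, inner_neg_right]
    rw [h3] at h1
    have h4 : ‖wstar - x‖ = ‖x - wstar‖ := norm_sub_rev _ _
    rw [h4] at h1
    linarith
  -- μ ≤ L
  have hμL : μ ≤ L := by
    have hFsmooth : ∀ x y, F x ≤ F y + (inner ℝ (gradient F y) (x - y) : ℝ)
        + L / 2 * ‖x - y‖ ^ 2 := by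
      intro x y
      have hinner : (inner ℝ (gradient F y) (x - y) : ℝ)
          = (1 / (N:ℝ)) * ∑ j, (inner ℝ (gradient (f j) y) (x - y) : ℝ) := by
        rw [aux_grad_avg f hf F hF y, real_inner_smul_left, sum_inner]
      have hsum : ∑ j, f j x ≤ ∑ j, (f j y + (inner ℝ (gradient (f j) y) (x - y) : ℝ)
          + L / 2 * ‖x - y‖ ^ 2) := by
        apply Finset.sum_le_sum
        intro j _
        have h1 := hsmooth j x y
        have h2 : Li j ≤ L := hL.2 (Set.mem_range_self j)
        nlinarith [sq_nonneg ‖x - y‖]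
      rw [hF x, hF y, hinner]
      rw [Finset.sum_add_distrib, Finset.sum_add_distrib] at hsum
      simp only [Finset.sum_const, Finset.card_univ, Fintype.card_fin, nsmul_eq_mul] at hsum
      have := mul_le_mul_of_nonneg_left hsum (by positivity : (0:ℝ) ≤ 1/(N:ℝ))
      calc (1/(N:ℝ)) * ∑ j, f j x
          ≤ (1/(N:ℝ)) * (∑ j, f j y + ∑ j, (inner ℝ (gradient (f j) y) (x - y) : ℝ)
              + (N:ℝ) * (L / 2 * ‖x - y‖ ^ 2)) := this
        _ = (1/(N:ℝ)) * ∑ j, f j y + (1/(N:ℝ)) * ∑ j, (inner ℝ (gradient (f j) y) (x - y) : ℝ)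
              + L / 2 * ‖x - y‖ ^ 2 := by field_simp
    -- take a unit vector
    have hv : ∃ v : EuclideanSpace ℝ (Fin d), ‖v‖ = 1 := by
      refine ⟨EuclideanSpace.single ⟨0, hd⟩ (1:ℝ), ?_⟩
      rw [EuclideanSpace.norm_single]
      norm_num
    obtain ⟨v, hv1⟩ := hv
    have h1 := hsc (wstar + v) wstar
    have h2 := hFsmooth (wstar + v) wstar
    have h3 : wstar + v - wstar = v := by abel
    rw [h3] at h1 h2
    rw [hv1] at h1 h2
    nlinarith
  have hL0 : 0 < L := lt_of_lt_of_le hμ0 hμL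
  -- scalar constants
  have h2L2 : (0:ℝ) < 2*L^2 := by positivity
  have hηL2 : η * (2*L^2) < μ * θ := by
    rw [lt_div_iff₀ h2L2] at hη
    linarith [hη]
  have hμ2L2 : μ^2 ≤ L^2 := by nlinarith
  have h2ημ : 2*η*μ < θ := by
    nlinarith [mul_pos hμ0 (by linarith : (0:ℝ) < μ*θ - η*(2*L^2)),
      mul_nonneg hθ0.le (sub_nonneg.2 hμ2L2), sq_nonneg L, hL0]
  have hden : (0:ℝ) < θ*μ - η*L^2 := by nlinarith
  obtain ⟨a, ha⟩ : ∃ a : ℝ, a = 1 - 2 * η * (μ - η * L ^ 2 / θ) := ⟨_, rfl⟩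
  rw [← ha] at hγ
  have haa : a = 1 - 2*η*μ + 2*η^2*L^2/θ := by rw [ha]; field_simp; ring
  have hpos1 : (0:ℝ) < 2*η^2*L^2/θ := by positivity
  have ha0 : 0 < a := by rw [haa]; nlinarith
  have ha1 : a < 1 := by
    rw [haa]
    have : 2*η^2*L^2/θ < 2*η*μ := by
      rw [div_lt_iff₀ hθ0]
      nlinarith
    linarith
  obtain ⟨c₁, hc₁def⟩ : ∃ c : ℝ, c = 1 - θ := ⟨_, rfl⟩
  obtain ⟨c₂, hc₂def⟩ : ∃ c : ℝ, c = θ - 2*η*μ + 2*η^2*L^2 + η^2*L^2*(1-θ)/θ := ⟨_, rfl⟩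
  have hfac : (0:ℝ) ≤ η^2*L^2*(1-θ) :=
    mul_nonneg (mul_nonneg (sq_nonneg η) (sq_nonneg L)) (by linarith)
  have hfacdiv : (0:ℝ) ≤ η^2*L^2*(1-θ)/θ := div_nonneg hfac hθ0.le
  have h2η2L2 : (0:ℝ) ≤ 2*η^2*L^2 := by positivity
  have hc₁0 : 0 ≤ c₁ := by rw [hc₁def]; linarith
  have hc₂0 : 0 ≤ c₂ := by
    rw [hc₂def]
    linarith [h2ημ]
  have hcsum : c₁ + c₂ ≤ a := by
    have heq : c₁ + c₂ = a - η^2*L^2*(1-θ)/θ := by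
      rw [hc₁def, hc₂def, haa]
      field_simp
      ring
    linarith [heq, hfacdiv]
  -- independence lemmas
  have Pgen : ∀ n : ℕ, ∀ ι ι' : Fin S → Fin m → Fin N,
      (∀ s' : Fin S, (s' : ℕ) < n → ι s' = ι' s') → wtil ι n = wtil ι' n := by
    have Qgen : ∀ n : ℕ,
        (∀ ι ι' : Fin S → Fin m → Fin N,
          (∀ s' : Fin S, (s' : ℕ) < n → ι s' = ι' s') → wtil ι n = wtil ι' n) →
        ∀ s : Fin S, (s : ℕ) = n → ∀ t, t ≤ m → ∀ ι ι',
          (∀ s' : Fin S, (s' : ℕ) < n → ι s' = ι' s') →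
          (∀ t' : Fin m, (t' : ℕ) < t → ι s t' = ι' s t') → W ι s t = W ι' s t := by
      intro n hP s hs t
      induction t using Nat.strong_induction_on with
      | _ t iht =>
        match t with
        | 0 =>
          intro _ ι ι' h1 h2
          rw [hstart, hstart, hs]
          exact hP ι ι' h1
        | (t+1) =>
          intro ht1 ι ι' h1 h2
          have ht : t < m := ht1
          have e1 : W ι s t = W ι' s t :=
            iht t (Nat.lt_succ_self t) (by omega) ι ι' h1 (fun t' h => h2 t' (by omega))
          have e2 : W ι s (t - del s t) = W ι' s (t - del s t) :=
            iht (t - del s t) (by omega) (by omega) ι ι' h1 (fun t' h => h2 t' (by omega))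
          have e3 : wtil ι s.val = wtil ι' s.val := by
            rw [hs]; exact hP ι ι' h1
          have e4 : ι s ⟨t, ht⟩ = ι' s ⟨t, ht⟩ := h2 ⟨t, ht⟩ (by show t < t + 1; omega)
          rw [hrec ι s t ht, hrec ι' s t ht, e1, e2, e3, e4]
    intro n
    induction n with
    | zero => intro ι ι' _; rw [hw0, hw0]
    | succ n ih =>
      intro ι ι' h
      by_cases hn : n < S
      · have heq1 : wtil ι (n+1) = W ι ⟨n, hn⟩ m := hout ι ⟨n, hn⟩
        have heq2 : wtil ι' (n+1) = W ι' ⟨n, hn⟩ m := hout ι' ⟨n, hn⟩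
        rw [heq1, heq2]
        exact Qgen n ih ⟨n, hn⟩ rfl m le_rfl ι ι'
          (fun s' hs' => h s' (by omega))
          (fun t' _ => by rw [h ⟨n, hn⟩ (by simp)])
      · have : ι = ι' := funext fun s' => h s' (by omega)
        rw [this]
  have Qtop : ∀ s : Fin S, ∀ t, t ≤ m → ∀ ι ι' : Fin S → Fin m → Fin N,
      (∀ s' : Fin S, (s' : ℕ) < (s : ℕ) → ι s' = ι' s') →
      (∀ t' : Fin m, (t' : ℕ) < t → ι s t' = ι' s t') → W ι s t = W ι' s t := by
    intro s t
    induction t using Nat.strong_induction_on with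
    | _ t iht =>
      match t with
      | 0 =>
        intro _ ι ι' h1 h2
        rw [hstart, hstart]
        exact Pgen s.val ι ι' h1
      | (t+1) =>
        intro ht1 ι ι' h1 h2
        have ht : t < m := ht1
        have e1 : W ι s t = W ι' s t :=
          iht t (Nat.lt_succ_self t) (by omega) ι ι' h1 (fun t' h => h2 t' (by omega))
        have e2 : W ι s (t - del s t) = W ι' s (t - del s t) :=
          iht (t - del s t) (by omega) (by omega) ι ι' h1 (fun t' h => h2 t' (by omega))
        have e3 : wtil ι s.val = wtil ι' s.val := Pgen s.val ι ι' h1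
        have e4 : ι s ⟨t, ht⟩ = ι' s ⟨t, ht⟩ := h2 ⟨t, ht⟩ (by show t < t + 1; omega)
        rw [hrec ι s t ht, hrec ι' s t ht, e1, e2, e3, e4]
  -- expected squared distances
  set Sg : ℕ → ℝ := fun n => ∑ ι : Fin S → Fin m → Fin N, ‖wtil ι n - wstar‖^2 with hSg
  have hSgnonneg : ∀ n, 0 ≤ Sg n := by
    intro n; rw [hSg]; exact Finset.sum_nonneg fun ι _ => by positivity
  -- per-stage contraction
  have hstage1 : ∀ s : Fin S, Sg ((s:ℕ) + 1) ≤ γ * Sg (s:ℕ) := by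
    intro s
    set V : ℕ → ℝ := fun t => ∑ ι : Fin S → Fin m → Fin N, ‖W ι s t - wstar‖^2 with hV
    have hVnonneg : ∀ t, 0 ≤ V t := by
      intro t; rw [hV]; exact Finset.sum_nonneg fun ι _ => by positivity
    set b : ℝ := 2*η^2*L^2 * Sg (s:ℕ) with hb
    have hb0 : 0 ≤ b := by
      rw [hb]; have := hSgnonneg (s:ℕ); positivity
    -- the one-step inequality in expectation
    have hstep : ∀ t, t < m → V (t+1) ≤ c₁ * V t + c₂ * V (t - del s t) + b := by
      intro t ht
      set k : ℕ := t - del s t with hk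
      set r : (Fin S → Fin m → Fin N) → Fin N → ℝ := fun ι j =>
        ‖(1 - θ) • (W ι s t - η • (gradient (f j) (W ι s k)
              - gradient (f j) (wtil ι s.val) + gradient F (wtil ι s.val)))
          + θ • (W ι s k - η • (gradient (f j) (W ι s k)
              - gradient (f j) (wtil ι s.val) + gradient F (wtil ι s.val))) - wstar‖ ^ 2
        with hr
      have hq : ∀ ι, ‖W ι s (t+1) - wstar‖^2 = r ι (ι s ⟨t, ht⟩) := by
        intro ι
        simp only [hr]
        rw [hrec ι s t ht, ← hk]
      -- invariance of r under updates of the (s,t) coordinate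
      have hrinv : ∀ (ι : Fin S → Fin m → Fin N) (j' j : Fin N),
          r (Function.update ι s (Function.update (ι s) ⟨t, ht⟩ j')) j = r ι j := by
        intro ι j' j
        set ι2 := Function.update ι s (Function.update (ι s) ⟨t, ht⟩ j') with hι2
        have hagree : ∀ s' : Fin S, (s' : ℕ) < (s : ℕ) → ι2 s' = ι s' := by
          intro s' hs'
          rw [hι2, Function.update_of_ne (by intro hcon; rw [hcon] at hs'; omega)]
        have hagree2 : ∀ u : ℕ, u ≤ t → (∀ t' : Fin m, (t' : ℕ) < u → ι2 s t' = ι s t') := by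
          intro u hu t' ht'
          rw [hι2, Function.update_self, Function.update_of_ne]
          intro hcon
          have : (t' : ℕ) = t := by rw [hcon]
          omega
        have eW1 : W ι2 s t = W ι s t :=
          Qtop s t (le_of_lt ht) ι2 ι hagree (hagree2 t le_rfl)
        have eW2 : W ι2 s k = W ι s k :=
          Qtop s k (by omega) ι2 ι hagree (hagree2 k (by omega))
        have eP : wtil ι2 s.val = wtil ι s.val := Pgen s.val ι2 ι hagree
        rw [hr]
        simp only [eW1, eW2, eP]
      -- conditional expectation identity
      have hcond := aux_cond s ⟨t, ht⟩ r hrinv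
      have hVt1 : V (t+1) = (N:ℝ)⁻¹ * ∑ ι : Fin S → Fin m → Fin N, ∑ j, r ι j := by
        rw [hV]
        simp only [hq]
        rw [← hcond, ← mul_assoc, inv_mul_cancel₀ (ne_of_gt hNR), one_mul]
      rw [hVt1]
      have hpoint : ∀ ι : Fin S → Fin m → Fin N,
          (N:ℝ)⁻¹ * ∑ j, r ι j ≤ c₁ * ‖W ι s t - wstar‖^2 + c₂ * ‖W ι s k - wstar‖^2
            + 2*η^2*L^2 * ‖wtil ι s.val - wstar‖^2 := by
        intro ι
        have := aux_core hN (fun j x => gradient (f j) x) (gradient F) wstar L μ θ η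
          hgF hzero hLip hFLip hmono hθ0 hθ1 hη0 hL0
          (W ι s t) (W ι s k) (wtil ι s.val)
        simp only [hr, hc₁def, hc₂def]
        exact this
      calc (N:ℝ)⁻¹ * ∑ ι : Fin S → Fin m → Fin N, ∑ j, r ι j
          = ∑ ι : Fin S → Fin m → Fin N, (N:ℝ)⁻¹ * ∑ j, r ι j := by rw [Finset.mul_sum]
        _ ≤ ∑ ι : Fin S → Fin m → Fin N, (c₁ * ‖W ι s t - wstar‖^2
              + c₂ * ‖W ι s k - wstar‖^2 + 2*η^2*L^2 * ‖wtil ι s.val - wstar‖^2) :=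
            Finset.sum_le_sum fun ι _ => hpoint ι
        _ = c₁ * V t + c₂ * V k + b := by
            rw [hV, hb, hSg]
            rw [Finset.sum_add_distrib, Finset.sum_add_distrib, ← Finset.mul_sum,
              ← Finset.mul_sum, ← Finset.mul_sum]
      -- done
    -- apply the sequence lemma
    have hseq := aux_seq V a b c₁ c₂ τ m (fun t => t - del s t) hVnonneg ha0 ha1 hb0
      hc₁0 hc₂0 hcsum
      (fun t ht => by
        have hd1 : del s t ≤ τ := le_trans (hdel s t ht) (min_le_left _ _)
        exact ⟨by show t - τ ≤ t - del s t; omega, by show t - del s t ≤ t; omega⟩)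
      hstep
    -- V 0 and V m
    have hV0 : V 0 = Sg (s:ℕ) := by
      rw [hV, hSg]
      apply Finset.sum_congr rfl
      intro ι _
      rw [hstart ι s]
    have hVm : Sg ((s:ℕ) + 1) = V m := by
      rw [hV, hSg]
      apply Finset.sum_congr rfl
      intro ι _
      rw [hout ι s]
    rw [← hVm, hV0] at hseq
    -- bound the residual term
    have hres : b / (1 - a) ≤ η * L^2 / (θ*μ - η*L^2) * Sg (s:ℕ) := by
      have h1a : 1 - a = 2*η*(μ - η*L^2/θ) := by rw [ha]; ring
      have h1a0 : 0 < 1 - a := by linarith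
      have heq : (2*η^2*L^2) / (1 - a) = η*L^2*θ / (θ*μ - η*L^2) := by
        rw [h1a, div_eq_div_iff (by linarith) (by linarith)]
        field_simp
      have hmon : η*L^2*θ / (θ*μ - η*L^2) ≤ η*L^2 / (θ*μ - η*L^2) := by
        apply (div_le_div_iff_of_pos_right hden).mpr
        nlinarith [mul_nonneg (mul_nonneg hη0.le (sq_nonneg L)) (by linarith : (0:ℝ) ≤ 1-θ)]
      calc b / (1 - a) = ((2*η^2*L^2) / (1 - a)) * Sg (s:ℕ) := by
            rw [hb, mul_div_right_comm]
        _ = (η*L^2*θ / (θ*μ - η*L^2)) * Sg (s:ℕ) := by rw [heq]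
        _ ≤ (η * L^2 / (θ*μ - η*L^2)) * Sg (s:ℕ) :=
            mul_le_mul_of_nonneg_right hmon (hSgnonneg _)
    calc Sg ((s:ℕ)+1) ≤ a ^ ((m:ℝ)/(1+(τ:ℝ))) * Sg (s:ℕ) + b/(1-a) := hseq
      _ ≤ a ^ ((m:ℝ)/(1+(τ:ℝ))) * Sg (s:ℕ) + η*L^2/(θ*μ - η*L^2) * Sg (s:ℕ) := by
          linarith [hres]
      _ = γ * Sg (s:ℕ) := by rw [hγ]; ring
  -- iterate over stages
  have hγ0 : 0 ≤ γ := by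
    rw [hγ]
    have h1 : (0:ℝ) ≤ a ^ ((m : ℝ) / (1 + (τ : ℝ))) := Real.rpow_nonneg ha0.le _
    have h2 : (0:ℝ) < η * L^2 / (θ*μ - η*L^2) := div_pos (by positivity) hden
    linarith
  have hstageN : ∀ n, n ≤ S → Sg n ≤ γ^n * Sg 0 := by
    intro n
    induction n with
    | zero => intro _; simp
    | succ n ih =>
      intro hn1
      have hn : n < S := hn1
      have h1 : Sg (n+1) ≤ γ * Sg n := hstage1 ⟨n, hn⟩
      have h2 : Sg n ≤ γ^n * Sg 0 := ih (by omega)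
      calc Sg (n+1) ≤ γ * Sg n := h1
        _ ≤ γ * (γ^n * Sg 0) := mul_le_mul_of_nonneg_left h2 hγ0
        _ = γ^(n+1) * Sg 0 := by ring
  -- initial value
  have hcard : Fintype.card (Fin S → Fin m → Fin N) = N^(S*m) := by
    rw [Fintype.card_fun, Fintype.card_fun]
    simp [← pow_mul, Nat.mul_comm]
  have hSg0 : Sg 0 = (N:ℝ)^(S*m) * ‖w0 - wstar‖^2 := by
    rw [hSg]
    simp only [hw0]
    rw [Finset.sum_const, Finset.card_univ, hcard, nsmul_eq_mul]
    push_cast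
    ring
  -- distance at the optimum
  have hnw2 : ‖w0 - wstar‖^2 ≤ 2*(F w0 - F wstar)/μ := by
    have h1 := hsc w0 wstar
    rw [hzero] at h1
    simp only [inner_zero_left] at h1
    rw [le_div_iff₀ hμ0]
    linarith
  -- conclusion
  have hNpow : (0:ℝ) < (N:ℝ)^(S*m) := by positivity
  have hkey : Sg S ≤ γ^S * ((N:ℝ)^(S*m) * ‖w0 - wstar‖^2) := by
    have := hstageN S le_rfl
    rwa [hSg0] at this
  have hgoal : (1 / (N : ℝ) ^ (S * m)) * Sg S ≤ 2 * γ ^ S * (F w0 - F wstar) / μ := by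
    calc (1 / (N : ℝ) ^ (S * m)) * Sg S
        ≤ (1 / (N : ℝ) ^ (S * m)) * (γ^S * ((N:ℝ)^(S*m) * ‖w0 - wstar‖^2)) :=
          mul_le_mul_of_nonneg_left hkey (by positivity)
      _ = γ^S * ‖w0 - wstar‖^2 := by field_simp
      _ ≤ γ^S * (2*(F w0 - F wstar)/μ) :=
          mul_le_mul_of_nonneg_left hnw2 (pow_nonneg hγ0 S)
      _ = 2 * γ ^ S * (F w0 - F wstar) / μ := by ring
  exact hgoal
end
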